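/- Fix the switch distribution setup with N models and switch prior w. If w_{j,t} := Σ_{i_{<t}} w(i_{<t} j) ∏_{k=1}^{t-1} ρ_{i_k}(x_k|x_{<k}), then the weights satisfy the recursion w_{j,t+1} = (1/(N-1)) [ α_{t+1} r_t + (N(1-α_{t+1}) - 1) w_{j,t} ρ_j(x_t|x_{<t}) ], where r_t = Σ_{j=1}^N w_{j,t} ρ_j(x_t|x_{<t}). -/

import Mathlib

/-- The switch prior on a reversed index sequence (most recent index first):
`w(ε)=1`, `w(j)=1/N`, and appending index `a` at time `t` after `b` multiplies by
`(1-α_t)` if `a = b` and by `α_t/(N-1)` otherwise. -/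
noncomputable def swPriorRev (N : ℕ) (α : ℕ → ℝ) : List (Fin N) → ℝ
  | [] => 1
  | [_] => 1 / (N : ℝ)
  | a :: b :: rest =>
      (if a = b then 1 - α (rest.length + 2) else α (rest.length + 2) / ((N : ℝ) - 1)) *
        swPriorRev N α (b :: rest)

/-- The likelihood `∏_{k=1}^{t} ρ_{i_k}(x_k|x_{<k})` of a reversed index sequence
`[i_t, …, i_1]`, where `p j k` denotes `ρ_j(x_k|x_{<k})`. -/
def lik (N : ℕ) (p : Fin N → ℕ → ℝ) : List (Fin N) → ℝ
  | [] => 1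
  | a :: rest => p a (rest.length + 1) * lik N p rest

/-- `w_{j,t} = Σ_{i_{<t}} w(i_{<t} j) ∏_{k=1}^{t-1} ρ_{i_k}(x_k|x_{<k})`. -/
noncomputable def wjt (N : ℕ) (α : ℕ → ℝ) (p : Fin N → ℕ → ℝ) (j : Fin N) (t : ℕ) : ℝ :=
  ∑ i : Fin (t - 1) → Fin N,
    swPriorRev N α (j :: (List.ofFn i).reverse) * lik N p (List.ofFn i).reverse

/-- Weight-decomposition recursion: with `r_t = Σ_j w_{j,t} ρ_j(x_t|x_{<t})`,
`w_{j,t+1} = (1/(N-1)) [ α_{t+1} r_t + (N(1-α_{t+1}) - 1) w_{j,t} ρ_j(x_t|x_{<t}) ]`. -/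
lemma sum_snoc_aux {N n : ℕ} (g : (Fin (n + 1) → Fin N) → ℝ) :
    ∑ i : Fin (n + 1) → Fin N, g i =
      ∑ a : Fin N, ∑ i : Fin n → Fin N, g (Fin.snoc i a) := by
  rw [← (Fin.snocEquiv (fun _ => Fin N)).sum_comp g, Fintype.sum_prod_type]
  rfl

lemma ofFn_snoc_rev {N n : ℕ} (i : Fin n → Fin N) (a : Fin N) :
    (List.ofFn (Fin.snoc i a)).reverse = a :: (List.ofFn i).reverse := by
  rw [List.ofFn_succ']
  simp [Fin.snoc_castSucc, List.concat_eq_append]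

theorem wjt_recursion (N : ℕ) (hN : 2 ≤ N) (α : ℕ → ℝ)
    (hα : ∀ k, 0 ≤ α k ∧ α k ≤ 1) (p : Fin N → ℕ → ℝ) (t : ℕ) (ht : 1 ≤ t) (j : Fin N) :
    wjt N α p j (t + 1) =
      (1 / ((N : ℝ) - 1)) *
        (α (t + 1) * (∑ j' : Fin N, wjt N α p j' t * p j' t) +
          ((N : ℝ) * (1 - α (t + 1)) - 1) * wjt N α p j t * p j t) := by
  obtain ⟨s, rfl⟩ : ∃ s, t = s + 1 := ⟨t - 1, (Nat.succ_pred_eq_of_pos ht).symm⟩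
  have hN1 : ((N : ℝ) - 1) ≠ 0 := by
    have : (2 : ℝ) ≤ (N : ℝ) := by exact_mod_cast hN
    linarith
  have key : wjt N α p j (s + 1 + 1) =
      ∑ a : Fin N, ((if j = a then 1 - α (s + 2) else α (s + 2) / ((N : ℝ) - 1)) *
        (wjt N α p a (s + 1) * p a (s + 1))) := by
    have h1 : wjt N α p j (s + 1 + 1) =
        ∑ i : Fin (s + 1) → Fin N,
          swPriorRev N α (j :: (List.ofFn i).reverse) * lik N p (List.ofFn i).reverse := rfl
    rw [h1, sum_snoc_aux]
    refine Finset.sum_congr rfl fun a _ => ?_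
    have h2 : wjt N α p a (s + 1) =
        ∑ i : Fin s → Fin N,
          swPriorRev N α (a :: (List.ofFn i).reverse) * lik N p (List.ofFn i).reverse := rfl
    rw [h2, Finset.sum_mul, Finset.mul_sum]
    refine Finset.sum_congr rfl fun i _ => ?_
    rw [ofFn_snoc_rev]
    have hlen : ((List.ofFn i).reverse).length = s := by simp
    show (if j = a then 1 - α (((List.ofFn i).reverse).length + 2)
        else α (((List.ofFn i).reverse).length + 2) / ((N : ℝ) - 1)) *
        swPriorRev N α (a :: (List.ofFn i).reverse) *
        (p a (((List.ofFn i).reverse).length + 1) * lik N p ((List.ofFn i).reverse)) = _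
    rw [hlen]
    ring
  rw [key]
  have split : ∀ a : Fin N, (if j = a then 1 - α (s + 2) else α (s + 2) / ((N : ℝ) - 1)) *
      (wjt N α p a (s + 1) * p a (s + 1)) =
      α (s + 2) / ((N : ℝ) - 1) * (wjt N α p a (s + 1) * p a (s + 1)) +
      (if a = j then (1 - α (s + 2) - α (s + 2) / ((N : ℝ) - 1)) *
        (wjt N α p j (s + 1) * p j (s + 1)) else 0) := by
    intro a
    by_cases h : a = j
    · subst h; simp; ring
    · simp [h, Ne.symm h]
  simp only [split, Finset.sum_add_distrib, Finset.sum_ite_eq', Finset.mem_univ, if_true]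
  rw [← Finset.mul_sum]
  field_simp
  ring
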